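/- arXiv:1610.09829 — 2 statements merged into one kernel-verified Lean document; each statement's English description precedes it below -/
import Mathlib

section
/- Every finite p-group P admits a finite presentation ⟨X | R⟩ such that for every generator x ∈ X and every relator r ∈ R, the exponent sum of x in r is congruent to 0 modulo p. -/
/-- Exponent sum of the generator `x` in the word `w` of the free group. -/
def expSum {α : Type*} [DecidableEq α] (x : α) (w : FreeGroup α) : ℤ :=
  ((FreeGroup.toWord w).map (fun p => if p.1 = x then (if p.2 then (1:ℤ) else -1) else 0)).sum

private lemma expSum_mk {α : Type*} [DecidableEq α] (x : α) (L : List (α × Bool)) :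
    Multiplicative.toAdd
      ((FreeGroup.lift fun a => Multiplicative.ofAdd (if a = x then (1:ℤ) else 0))
        (FreeGroup.mk L))
      = (L.map (fun p => if p.1 = x then (if p.2 then (1:ℤ) else -1) else 0)).sum := by
  rw [FreeGroup.lift_mk]
  induction L with
  | nil => simp
  | cons q L ih =>
    simp only [List.map_cons, List.prod_cons, List.sum_cons, toAdd_mul, ih]
    congr 1
    rcases q with ⟨a, b⟩
    cases b <;> by_cases h : a = x <;> simp [h]

private lemma expSum_toAdd {α : Type*} [DecidableEq α] (x : α) (w : FreeGroup α) :
    Multiplicative.toAdd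
      ((FreeGroup.lift fun a => Multiplicative.ofAdd (if a = x then (1:ℤ) else 0)) w)
      = expSum x w := by
  rw [expSum, ← expSum_mk x w.toWord, FreeGroup.mk_toWord]

private lemma exists_basis_hom (p : ℕ) [Fact p.Prime] (V : Type*) [AddCommGroup V]
    [Module (ZMod p) V] [Finite V] :
    ∃ (n : ℕ) (v : Fin n → V) (φ : V →+ (Fin n → ZMod p)),
      (∀ x : V, x ∈ AddSubgroup.closure (Set.range v)) ∧ ∀ i, φ (v i) = Pi.single i 1 := by
  haveI : Module.Finite (ZMod p) V := Module.Finite.of_finite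
  let b := Module.finBasis (ZMod p) V
  refine ⟨_, ⇑b, b.equivFun.toLinearMap.toAddMonoidHom, ?_, ?_⟩
  · intro x
    have h1 : x ∈ Submodule.span (ZMod p) (Set.range ⇑b) := by rw [b.span_eq]; trivial
    have hle : Submodule.span (ZMod p) (Set.range ⇑b)
        ≤ AddSubgroup.toZModSubmodule p (AddSubgroup.closure (Set.range ⇑b)) :=
      Submodule.span_le.mpr (fun y hy => by simpa using AddSubgroup.subset_closure hy)
    simpa using hle h1
  · intro i
    funext j
    simp [Module.Basis.equivFun_self, Pi.single_apply, eq_comm]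

/-- Every finite `p`-group `P` has a finite presentation `⟨X ∣ R⟩` such that the exponent sum
of every generator in every relator is divisible by `p`. -/
theorem finite_pGroup_has_presentation_with_expSum_div_p
    (p : ℕ) (hp : p.Prime) (P : Type*) [Group P] [Finite P] (hP : IsPGroup p P) :
    ∃ (n : ℕ) (R : Finset (FreeGroup (Fin n))) (γ : FreeGroup (Fin n) →* P),
      Function.Surjective γ ∧
      γ.ker = Subgroup.normalClosure (R : Set (FreeGroup (Fin n))) ∧
      ∀ r ∈ R, ∀ x : Fin n, (p : ℤ) ∣ expSum x r := by
  haveI := Fact.mk hp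
  haveI : NeZero p := ⟨hp.ne_zero⟩
  -- Step 1: every maximal subgroup contains all p-th powers and commutators
  have hcoatom : ∀ M : Subgroup P, IsCoatom M →
      (∀ g : P, g ^ p ∈ M) ∧ (∀ g h : P, g * h * g⁻¹ * h⁻¹ ∈ M) := by
    intro M hM
    haveI := hP.isNilpotent
    have hnc : NormalizerCondition P := normalizerCondition_of_isNilpotent (G := P)
    haveI hMn : M.Normal := Subgroup.NormalizerCondition.normal_of_coatom M hnc hM
    have hQ : IsPGroup p (P ⧸ M) := hP.to_quotient M
    have hnt : Nontrivial (P ⧸ M) := by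
      rcases subsingleton_or_nontrivial (P ⧸ M) with hs | hn
      · exfalso; apply hM.1
        rw [eq_top_iff]; intro g _
        exact (QuotientGroup.eq_one_iff g).mp (Subsingleton.elim _ _)
      · exact hn
    have hdvd : p ∣ Nat.card (P ⧸ M) := by
      obtain ⟨k, hk⟩ := IsPGroup.iff_card.mp hQ
      rcases k with _ | k
      · exfalso
        rw [pow_zero] at hk
        exact (Finite.one_lt_card (α := P ⧸ M)).ne' hk
      · exact hk ▸ dvd_pow_self p (Nat.succ_ne_zero k)
    obtain ⟨g, hg⟩ := exists_prime_orderOf_dvd_card' p hdvd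
    have hzp : Subgroup.zpowers g = ⊤ := by
      have hle : M ≤ Subgroup.comap (QuotientGroup.mk' M) (Subgroup.zpowers g) := by
        intro m hm
        have h1 : (QuotientGroup.mk' M) m = 1 := (QuotientGroup.eq_one_iff m).mpr hm
        rw [Subgroup.mem_comap, h1]
        exact Subgroup.one_mem _
      rcases eq_or_lt_of_le hle with heq | hlt
      · exfalso
        have hmap : Subgroup.map (QuotientGroup.mk' M) M = ⊥ := by
          rw [eq_bot_iff]
          rintro y ⟨m, hm, rfl⟩
          simpa using (QuotientGroup.eq_one_iff m).mpr hm
        have : Subgroup.zpowers g = ⊥ := by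
          rw [← Subgroup.map_comap_eq_self_of_surjective
            (QuotientGroup.mk'_surjective M) (Subgroup.zpowers g), ← heq, hmap]
        have hg1 : g = 1 := by
          have hmem := Subgroup.mem_zpowers g
          rw [this] at hmem
          simpa using hmem
        rw [hg1, orderOf_one] at hg
        exact hp.one_lt.ne' hg.symm
      · have htop := hM.2 _ hlt
        have := congrArg (Subgroup.map (QuotientGroup.mk' M)) htop
        rwa [Subgroup.map_comap_eq_self_of_surjective (QuotientGroup.mk'_surjective M),
          Subgroup.map_top_of_surjective _ (QuotientGroup.mk'_surjective M)] at this
    have hcard : Nat.card (P ⧸ M) = p := by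
      rw [← hg, ← Nat.card_zpowers, hzp, Subgroup.card_top]
    haveI : IsCyclic (P ⧸ M) := isCyclic_of_prime_card hcard
    have hc : ∀ u v : P ⧸ M, u * v = v * u := fun u v => by
      letI := IsCyclic.commGroup (α := P ⧸ M)
      exact mul_comm u v
    constructor
    · intro a
      have h1 : ((QuotientGroup.mk' M) a) ^ p = 1 := by
        rw [← hcard]; exact pow_card_eq_one'
      rw [← map_pow] at h1
      exact (QuotientGroup.eq_one_iff _).mp h1
    · intro a b
      apply (QuotientGroup.eq_one_iff _).mp
      have : ((a * b * a⁻¹ * b⁻¹ : P) : P ⧸ M)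
          = (a : P ⧸ M) * b * (a : P ⧸ M)⁻¹ * (b : P ⧸ M)⁻¹ := by
        simp
      rw [this, hc (a : P ⧸ M) (b : P ⧸ M)]
      group
  have hfrat_pow : ∀ g : P, g ^ p ∈ frattini P := by
    intro g
    rw [frattini, Order.radical]
    simp only [Subgroup.mem_iInf]
    intro M hM
    exact (hcoatom M hM).1 g
  have hfrat_comm : ∀ a b : P, a * b * a⁻¹ * b⁻¹ ∈ frattini P := by
    intro a b
    rw [frattini, Order.radical]
    simp only [Subgroup.mem_iInf]
    intro M hM
    exact (hcoatom M hM).2 a b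
  -- Step 2: the Frattini quotient is an elementary abelian p-group
  set N := frattini P with hN
  haveI : N.Normal := inferInstance
  have hQcomm : ∀ u v : P ⧸ N, u * v = v * u := by
    intro u v
    obtain ⟨a, rfl⟩ := QuotientGroup.mk'_surjective N u
    obtain ⟨b, rfl⟩ := QuotientGroup.mk'_surjective N v
    have h1 : (a * b) * (b * a)⁻¹ ∈ N := by
      have h2 := hfrat_comm a b
      have h3 : (a * b) * (b * a)⁻¹ = a * b * a⁻¹ * b⁻¹ := by group
      rw [h3]; exact h2
    have h2 : (QuotientGroup.mk' N) ((a * b) * (b * a)⁻¹) = 1 :=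
      (QuotientGroup.eq_one_iff _).mpr h1
    rw [map_mul, map_inv, mul_inv_eq_one, map_mul, map_mul] at h2
    exact h2
  have hQpow : ∀ u : P ⧸ N, u ^ p = 1 := by
    intro u
    obtain ⟨a, rfl⟩ := QuotientGroup.mk'_surjective N u
    rw [← map_pow]
    exact (QuotientGroup.eq_one_iff _).mpr (hfrat_pow a)
  letI cgQ : CommGroup (P ⧸ N) :=
    { (inferInstance : Group (P ⧸ N)) with mul_comm := hQcomm }
  letI : Module (ZMod p) (Additive (P ⧸ N)) := AddCommGroup.zmodModule (by
    intro x
    exact congrArg Additive.ofMul (hQpow (Additive.toMul x)))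
  haveI : Finite (P ⧸ N) := Quotient.finite _
  letI cgQ : CommGroup (P ⧸ N) :=
    { (inferInstance : Group (P ⧸ N)) with mul_comm := hQcomm }
  letI acgQ : AddCommGroup (Additive (P ⧸ N)) := Additive.addCommGroup
  letI modQ : Module (ZMod p) (Additive (P ⧸ N)) := AddCommGroup.zmodModule (by
    intro x
    exact congrArg Additive.ofMul (hQpow (Additive.toMul x)))
  haveI finQ : Finite (Additive (P ⧸ N)) := Finite.of_equiv _ Additive.ofMul
  obtain ⟨n, v, φ₀, hvclos, hφv⟩ :=
    @exists_basis_hom p _ (Additive (P ⧸ N)) acgQ modQ finQ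
  -- Step 3: lift the basis to generators of P
  have hsur := QuotientGroup.mk'_surjective N
  have hgex : ∀ i : Fin n, ∃ a : P, (QuotientGroup.mk' N) a = Additive.toMul (v i) :=
    fun i => hsur _
  choose g hg using hgex
  let γ : FreeGroup (Fin n) →* P := FreeGroup.lift g
  -- Step 4: γ is surjective
  have hclos : ∀ q : P ⧸ N,
      q ∈ Subgroup.closure (Set.range fun i => (QuotientGroup.mk' N) (g i)) := by
    intro q
    have key : ∀ y : Additive (P ⧸ N), y ∈ AddSubgroup.closure (Set.range v) →
        Additive.toMul y ∈
          Subgroup.closure (Set.range fun i => (QuotientGroup.mk' N) (g i)) := by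
      intro y hy
      refine AddSubgroup.closure_induction ?_ ?_ ?_ ?_ hy
      · rintro z ⟨i, rfl⟩
        exact Subgroup.subset_closure ⟨i, hg i⟩
      · exact Subgroup.one_mem _
      · intro z w _ _ hz hw
        exact Subgroup.mul_mem _ hz hw
      · intro z _ hz
        exact Subgroup.inv_mem _ hz
    exact key _ (hvclos (Additive.ofMul q))
  have hrange : γ.range = ⊤ := by
    have himg : (QuotientGroup.mk' N) '' (Set.range g)
        = Set.range fun i => (QuotientGroup.mk' N) (g i) := by
      rw [← Set.range_comp]; rfl
    have h1 : Subgroup.map (QuotientGroup.mk' N) γ.range = ⊤ := by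
      rw [show γ.range = (FreeGroup.lift g).range from rfl, FreeGroup.range_lift_eq_closure,
        MonoidHom.map_closure, himg, eq_top_iff]
      intro q _
      exact hclos q
    have h2 := congrArg (Subgroup.comap (QuotientGroup.mk' N)) h1
    rw [Subgroup.comap_map_eq, Subgroup.comap_top, QuotientGroup.ker_mk'] at h2
    haveI : Finite (Subgroup P) :=
      Finite.of_injective (fun H : Subgroup P => (H : Set P)) SetLike.coe_injective
    exact frattini_nongenerating h2
  have hγ : Function.Surjective γ := MonoidHom.range_eq_top.mp hrange
  -- Step 5: the exponent-sum homomorphism factors through γ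
  let φ : P →* Multiplicative (Fin n → ZMod p) :=
    (AddMonoidHom.toMultiplicativeRight φ₀).comp (QuotientGroup.mk' N)
  let ε : FreeGroup (Fin n) →* Multiplicative (Fin n → ZMod p) :=
    FreeGroup.lift fun i => Multiplicative.ofAdd (Pi.single i (1 : ZMod p))
  have hfac : φ.comp γ = ε := by
    apply FreeGroup.ext_hom
    intro i
    show φ (γ (FreeGroup.of i)) = ε (FreeGroup.of i)
    rw [show γ (FreeGroup.of i) = g i from FreeGroup.lift_apply_of,
      show ε (FreeGroup.of i) = Multiplicative.ofAdd (Pi.single i (1 : ZMod p))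
        from FreeGroup.lift_apply_of]
    show Multiplicative.ofAdd (φ₀ (Additive.ofMul ((QuotientGroup.mk' N) (g i))))
      = Multiplicative.ofAdd (Pi.single i (1 : ZMod p))
    rw [hg i]
    exact congrArg Multiplicative.ofAdd (hφv i)
  have hker : ∀ w : FreeGroup (Fin n), w ∈ γ.ker → ∀ x : Fin n, (p : ℤ) ∣ expSum x w := by
    intro w hw x
    have hε : ε w = 1 := by
      rw [← hfac]
      show φ (γ w) = 1
      rw [MonoidHom.mem_ker.mp hw, map_one]
    have hAB : ((AddMonoidHom.toMultiplicative
          (Pi.evalAddMonoidHom (fun _ : Fin n => ZMod p) x)).comp ε : _)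
        = (AddMonoidHom.toMultiplicative (Int.castAddHom (ZMod p))).comp
            (FreeGroup.lift fun a => Multiplicative.ofAdd (if a = x then (1:ℤ) else 0)) := by
      apply FreeGroup.ext_hom
      intro i
      show Multiplicative.ofAdd (Multiplicative.toAdd (ε (FreeGroup.of i)) x)
        = Multiplicative.ofAdd
            ((Multiplicative.toAdd ((FreeGroup.lift fun a =>
              Multiplicative.ofAdd (if a = x then (1:ℤ) else 0)) (FreeGroup.of i)) : ℤ) : ZMod p)
      rw [show ε (FreeGroup.of i) = Multiplicative.ofAdd (Pi.single i (1 : ZMod p))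
          from FreeGroup.lift_apply_of,
        show (FreeGroup.lift fun a => Multiplicative.ofAdd (if a = x then (1:ℤ) else 0))
            (FreeGroup.of i) = Multiplicative.ofAdd (if i = x then (1:ℤ) else 0)
          from FreeGroup.lift_apply_of]
      simp only [toAdd_ofAdd]
      congr 1
      by_cases h : i = x
      · subst h; simp
      · simp [h, Pi.single_apply, fun hh : x = i => h hh.symm]
    have h3 := DFunLike.congr_fun hAB w
    have h4 : Multiplicative.toAdd (ε w) x
        = ((expSum x w : ℤ) : ZMod p) := by
      have h5 := congrArg Multiplicative.toAdd h3
      simp only [MonoidHom.comp_apply, AddMonoidHom.toMultiplicative_apply_apply,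
        toAdd_ofAdd] at h5
      rw [expSum_toAdd] at h5
      simpa using h5
    rw [hε] at h4
    simp only [toAdd_one, Pi.zero_apply] at h4
    exact (ZMod.intCast_zmod_eq_zero_iff_dvd _ p).mp h4.symm
  -- Step 6: finite generation of the kernel
  haveI : Group.FG (FreeGroup (Fin n)) :=
    Group.fg_iff.mpr ⟨Set.range FreeGroup.of, FreeGroup.closure_range_of _, Set.finite_range _⟩
  haveI : γ.ker.FiniteIndex := by
    constructor
    rw [Subgroup.index_ker, hrange]
    have : Nat.card (⊤ : Subgroup P) = Nat.card P := Subgroup.card_top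
    rw [this]
    exact Nat.card_pos.ne'
  haveI : Group.FG γ.ker := Subgroup.fg_of_index_ne_zero _
  have hkerfg : γ.ker.FG := (Group.fg_iff_subgroup_fg γ.ker).mp inferInstance
  obtain ⟨S, hS⟩ := hkerfg
  refine ⟨n, S, γ, hγ, ?_, ?_⟩
  · apply le_antisymm
    · rw [← hS]
      exact Subgroup.closure_le_normalClosure
    · haveI : γ.ker.Normal := MonoidHom.normal_ker γ
      refine Subgroup.normalClosure_le_normal ?_
      intro x hx
      rw [← hS]
      exact Subgroup.subset_closure hx
  · intro r hr x
    have hrker : r ∈ γ.ker := by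
      rw [← hS]
      exact Subgroup.subset_closure hr
    exact hker r hrker x
end

section
/- (Gaschütz) Let p be a prime, G a finite group, V a normal abelian p-subgroup of G, and P a Sylow p-subgroup of G. Then G splits over V (i.e., V has a complement in G) if and only if P splits over V. -/
open scoped Pointwise IsMulCommutative

private theorem gaschuetz_VleP {p : ℕ} [Fact p.Prime] {G : Type*} [Group G] [Finite G]
    {V : Subgroup G} [V.Normal] (hV : IsPGroup p V) (P : Sylow p G) : V ≤ ↑P := by
  obtain ⟨Q', hQ'⟩ := hV.exists_le_sylow
  obtain ⟨g, rfl⟩ := MulAction.exists_smul_eq G Q' P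
  intro v hv
  have : g⁻¹ * v * g ∈ V := by
    simpa using Subgroup.Normal.conj_mem ‹V.Normal› v hv g⁻¹
  have hmem : v ∈ MulAut.conj g • (Q' : Subgroup G) := by
    rw [Subgroup.mem_pointwise_smul_iff_inv_smul_mem]
    exact hQ' (by simpa [MulAut.smul_def] using this)
  exact hmem

private theorem gaschuetz_aux {p : ℕ} [Fact p.Prime] {G : Type*} [Group G] [Finite G]
    {V : Subgroup G} [V.Normal] (hV : IsPGroup p V) (hVab : IsMulCommutative V)
    (P : Sylow p G) (Q : Subgroup G) (hQ1 : V ⊓ Q = ⊥) (hQ2 : V ⊔ Q = ↑P) :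
    ∃ C : Subgroup G, V ⊓ C = ⊥ ∧ V ⊔ C = ⊤ := by
  classical
  haveI := hVab
  have hVP : V ≤ ↑P := gaschuetz_VleP hV P
  set π : G →* G ⧸ V := QuotientGroup.mk' V with hπdef
  have hker : ∀ g : G, π g = 1 ↔ g ∈ V := by
    intro g
    exact QuotientGroup.eq_one_iff g
  have hπsurj : Function.Surjective π := QuotientGroup.mk'_surjective V
  set Pb : Subgroup (G ⧸ V) := (P : Subgroup G).map π with hPbdef
  have hQPb : Q.map π = Pb := by
    rw [hPbdef, ← hQ2, Subgroup.map_sup, QuotientGroup.map_mk'_self, bot_sup_eq]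
  have hQmem : ∀ y : G ⧸ V, y ∈ Pb → ∃ q, q ∈ Q ∧ π q = y := by
    intro y hy
    rw [← hQPb] at hy
    obtain ⟨q, hq, rfl⟩ := hy
    exact ⟨q, hq, rfl⟩
  have hQuniq : ∀ q q' : G, q ∈ Q → q' ∈ Q → π q = π q' → q = q' := by
    intro q q' hq hq' h
    have h1 : q * q'⁻¹ ∈ V := by
      rw [← hker]
      simp [map_mul, h]
    have h2 : q * q'⁻¹ ∈ V ⊓ Q := ⟨h1, Subgroup.mul_mem _ hq (Subgroup.inv_mem _ hq')⟩
    rw [hQ1, Subgroup.mem_bot] at h2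
    exact mul_inv_eq_one.mp h2
  -- construct an equivariant section σ of π
  obtain ⟨σ, hσπ, hσQ, hσ1⟩ : ∃ σ : G ⧸ V → G, (∀ x, π (σ x) = x) ∧
      (∀ x (q : G), q ∈ Q → σ (x * π q) = σ x * q) ∧ σ 1 = 1 := by
    choose s hsQ hsπ using hQmem
    let s' : (G ⧸ V) → G := fun y => if h : y ∈ Pb then s y h else 1
    have hs'Q : ∀ y (h : y ∈ Pb), s' y ∈ Q := fun y h => by simp only [s', dif_pos h]; exact hsQ y h
    have hs'π : ∀ y (h : y ∈ Pb), π (s' y) = y := fun y h => by simp only [s', dif_pos h]; exact hsπ y h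
    let R : (G ⧸ V) → (G ⧸ V) := fun x => (QuotientGroup.mk x : (G ⧸ V) ⧸ Pb).out
    have hR : ∀ x, (R x)⁻¹ * x ∈ Pb := fun x =>
      QuotientGroup.eq.mp (QuotientGroup.out_eq' (QuotientGroup.mk x))
    have hRmul : ∀ x y, y ∈ Pb → R (x * y) = R x := fun x y hy => by
      simp only [R, QuotientGroup.mk_mul_of_mem x hy]
    have hπout : ∀ x : G ⧸ V, π x.out = x := fun x => QuotientGroup.out_eq' x
    let σ0 : (G ⧸ V) → G := fun x => (R x).out * s' ((R x)⁻¹ * x)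
    have hσ0π : ∀ x, π (σ0 x) = x := by
      intro x
      simp only [σ0, map_mul, hπout, hs'π _ (hR x)]
      group
    have hσ0Q : ∀ x (q : G), q ∈ Q → σ0 (x * π q) = σ0 x * q := by
      intro x q hq
      have hπq : π q ∈ Pb := by rw [← hQPb]; exact ⟨q, hq, rfl⟩
      have e1 : R (x * π q) = R x := hRmul x (π q) hπq
      have e2 : s' ((R x)⁻¹ * (x * π q)) = s' ((R x)⁻¹ * x) * q := by
        apply hQuniq _ _ (hs'Q _ (by rw [← mul_assoc]; exact Subgroup.mul_mem _ (hR x) hπq))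
          (Subgroup.mul_mem _ (hs'Q _ (hR x)) hq)
        rw [map_mul, hs'π _ (hR x), hs'π _ (by rw [← mul_assoc]; exact Subgroup.mul_mem _ (hR x) hπq)]
        group
      simp only [σ0, e1, e2, mul_assoc]
    refine ⟨fun x => (σ0 1)⁻¹ * σ0 x, fun x => ?_, fun x q hq => ?_, by group⟩
    · rw [map_mul, map_inv, hσ0π, hσ0π]; group
    · show (σ0 1)⁻¹ * σ0 (x * π q) = (σ0 1)⁻¹ * σ0 x * q
      rw [hσ0Q x q hq]
      simp [σ0, mul_assoc]
  -- the index n and the inverse multiplier m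
  set n : ℕ := Pb.index with hndef
  have hnP : n = (P : Subgroup G).index := by
    rw [hndef, hPbdef]
    exact Subgroup.index_map_eq _ hπsurj (by rw [QuotientGroup.ker_mk']; exact hVP)
  have hndvd : ¬ p ∣ n := by
    rw [hnP]
    exact P.not_dvd_index
  obtain ⟨m, hm⟩ : ∃ m : ℕ, ∀ v : ↥V, v ^ (n * m) = v := by
    obtain ⟨k, hk⟩ := hV.exists_card_eq
    rcases Nat.lt_or_ge 1 (Nat.card ↥V) with h1 | h1
    · have hcop : Nat.Coprime n (Nat.card ↥V) := by
        rw [hk]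
        exact Nat.Coprime.pow_right _
          (((Fact.out : p.Prime).coprime_iff_not_dvd).mpr hndvd).symm
      obtain ⟨m, -, hm'⟩ := Nat.exists_mul_mod_eq_one_of_coprime hcop h1
      refine ⟨m, fun v => ?_⟩
      have h2 : n * m = Nat.card ↥V * (n * m / Nat.card ↥V) + 1 := by
        conv_lhs => rw [← Nat.div_add_mod (n * m) (Nat.card ↥V)]
        rw [hm']
      rw [h2, pow_add, pow_mul, pow_card_eq_one', one_pow, one_mul, pow_one]
    · haveI : Subsingleton ↥V := by
        have hcard1 : Nat.card ↥V = 1 := le_antisymm h1 Nat.card_pos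
        exact (Nat.card_eq_one_iff_unique.mp hcard1).1
      exact ⟨1, fun v => Subsingleton.elim _ _⟩
  -- the averaging construction
  haveI : Fintype ((G ⧸ V) ⧸ Pb) := Fintype.ofFinite _
  have hcard : (Finset.univ : Finset ((G ⧸ V) ⧸ Pb)).card = n := by
    rw [Finset.card_univ, ← Nat.card_eq_fintype_card]
    rfl
  have hcV : ∀ x y : G ⧸ V, σ x * σ y * (σ (x * y))⁻¹ ∈ V := by
    intro x y
    rw [← hker]
    simp only [map_mul, map_inv, hσπ]
    group
  set c : (G ⧸ V) → (G ⧸ V) → ↥V := fun x y => ⟨σ x * σ y * (σ (x * y))⁻¹, hcV x y⟩ with hcdef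
  have hcspec : ∀ x y, (c x y : G) = σ x * σ y * (σ (x * y))⁻¹ := fun x y => rfl
  have hAmem : ∀ (x : G ⧸ V) (v : ↥V), σ x * (v : G) * (σ x)⁻¹ ∈ V := fun x v =>
    Subgroup.Normal.conj_mem ‹V.Normal› _ v.2 _
  set A : (G ⧸ V) → (↥V →* ↥V) := fun x =>
    { toFun := fun v => ⟨σ x * (v : G) * (σ x)⁻¹, hAmem x v⟩
      map_one' := by ext; simp
      map_mul' := by
        intro v w
        ext
        show σ x * ((v : G) * (w : G)) * (σ x)⁻¹ =
          (σ x * (v : G) * (σ x)⁻¹) * (σ x * (w : G) * (σ x)⁻¹)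
        group } with hAdef
  have hAspec : ∀ (x : G ⧸ V) (v : ↥V), ((A x v : ↥V) : G) = σ x * (v : G) * (σ x)⁻¹ :=
    fun x v => rfl
  have key : ∀ x y z : G ⧸ V, c x y * c (x * y) z = A x (c y z) * c x (y * z) := by
    intro x y z
    ext
    simp only [Subgroup.coe_mul, hcspec, hAspec]
    rw [← mul_assoc x y z]
    group
  have hcoset : ∀ x y z : G ⧸ V,
      (QuotientGroup.mk y : (G ⧸ V) ⧸ Pb) = QuotientGroup.mk z → c x y = c x z := by
    intro x y z h
    obtain ⟨q, hqQ, hqπ⟩ := hQmem _ (QuotientGroup.eq.mp h)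
    have hz : z = y * π q := by rw [hqπ, mul_inv_cancel_left]
    subst hz
    ext
    simp only [hcspec]
    rw [hσQ y q hqQ, ← mul_assoc x y (π q), hσQ (x * y) q hqQ]
    group
  set e : (G ⧸ V) → ↥V := fun x => ∏ C : (G ⧸ V) ⧸ Pb, c x C.out with hedef
  have hmain : ∀ x y, (c x y) ^ n * e (x * y) = A x (e y) * e x := by
    intro x y
    have reindex : ∏ C : (G ⧸ V) ⧸ Pb, c x (y * C.out) = e x := by
      have h1 : ∀ C : (G ⧸ V) ⧸ Pb, c x (y * C.out) = c x ((y • C).out) := by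
        intro C
        apply hcoset
        rw [QuotientGroup.out_eq' (y • C)]
        simpa [smul_eq_mul] using MulAction.Quotient.mk_smul_out (G := G ⧸ V) Pb y C
      rw [Finset.prod_congr rfl (fun C _ => h1 C)]
      exact Fintype.prod_equiv (MulAction.toPerm y) _ _ (fun C => rfl)
    calc (c x y) ^ n * e (x * y)
        = ∏ C : (G ⧸ V) ⧸ Pb, (c x y * c (x * y) C.out) := by
          rw [Finset.prod_mul_distrib, Finset.prod_const, hcard]
      _ = ∏ C : (G ⧸ V) ⧸ Pb, (A x (c y C.out) * c x (y * C.out)) :=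
          Finset.prod_congr rfl (fun C _ => key x y C.out)
      _ = A x (e y) * e x := by
          rw [Finset.prod_mul_distrib, ← map_prod, reindex]
  set d : (G ⧸ V) → ↥V := fun x => (e x ^ m)⁻¹ with hddef
  have hd : ∀ x y, d (x * y) = d x * A x (d y) * c x y := by
    intro x y
    have h2 : c x y * e (x * y) ^ m = A x (e y ^ m) * e x ^ m := by
      calc c x y * e (x * y) ^ m = (c x y) ^ (n * m) * e (x * y) ^ m := by rw [hm]
        _ = ((c x y) ^ n) ^ m * e (x * y) ^ m := by rw [pow_mul]
        _ = ((c x y) ^ n * e (x * y)) ^ m := (mul_pow _ _ m).symm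
        _ = (A x (e y) * e x) ^ m := by rw [hmain x y]
        _ = A x (e y) ^ m * e x ^ m := mul_pow _ _ m
        _ = A x (e y ^ m) * e x ^ m := by rw [map_pow]
    show (e (x * y) ^ m)⁻¹ = (e x ^ m)⁻¹ * A x ((e y ^ m)⁻¹) * c x y
    rw [map_inv]
    have h3 : e (x * y) ^ m = (c x y)⁻¹ * (A x (e y ^ m) * e x ^ m) := by
      rw [← h2]; group
    rw [h3, mul_inv_rev, mul_inv_rev, inv_inv]
  have hρmul : ∀ x y : G ⧸ V,
      ((d (x * y) : G) * σ (x * y)) = ((d x : G) * σ x) * ((d y : G) * σ y) := by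
    intro x y
    rw [hd x y]
    simp only [Subgroup.coe_mul, hAspec, hcspec]
    group
  let f : (G ⧸ V) →* G := MonoidHom.mk' (fun x => (d x : G) * σ x) hρmul
  have hfπ : ∀ x, π (f x) = x := by
    intro x
    have h4 : π (d x : G) = 1 := (hker _).mpr (d x).2
    show π ((d x : G) * σ x) = x
    rw [map_mul, h4, one_mul, hσπ]
  refine ⟨f.range, ?_, ?_⟩
  · rw [eq_bot_iff]
    intro g hg
    rw [Subgroup.mem_inf] at hg
    obtain ⟨y, rfl⟩ := MonoidHom.mem_range.mp hg.2
    have hy1 : y = 1 := by rw [← hfπ y]; exact (hker _).mpr hg.1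
    rw [Subgroup.mem_bot, hy1, map_one]
  · rw [eq_top_iff]
    intro g _
    have h5 : g * (f (π g))⁻¹ ∈ V := by
      rw [← hker]
      simp [map_mul, hfπ]
    have h6 : g = (g * (f (π g))⁻¹) * f (π g) := by group
    rw [h6]
    exact Subgroup.mul_mem _ (Subgroup.mem_sup_left h5)
      (Subgroup.mem_sup_right ⟨π g, rfl⟩)

/-- **Gaschütz' theorem.** Let `p` be a prime, `V` a normal abelian `p`-subgroup of a finite
group `G`, and `P` a Sylow `p`-subgroup of `G`. Then `G` splits over `V` if and only if
`P` splits over `V`. -/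
theorem gaschuetz_split_iff (p : ℕ) [Fact p.Prime] (G : Type*) [Group G] [Finite G]
    (V : Subgroup G) [V.Normal] (hV : IsPGroup p V) (hVab : IsMulCommutative V)
    (P : Sylow p G) :
    (∃ C : Subgroup G, V ⊓ C = ⊥ ∧ V ⊔ C = ⊤) ↔
      (∃ C : Subgroup G, C ≤ P ∧ V ⊓ C = ⊥ ∧ V ⊔ C = (P : Subgroup G)) := by
  have hVP : V ≤ ↑P := gaschuetz_VleP hV P
  constructor
  · rintro ⟨C, hC1, hC2⟩
    refine ⟨↑P ⊓ C, inf_le_left, ?_, ?_⟩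
    · rw [eq_bot_iff, ← hC1]
      exact inf_le_inf_left V inf_le_right
    · refine le_antisymm (sup_le hVP inf_le_left) ?_
      intro x hx
      have hxVC : x ∈ (V : Set G) * C := by
        rw [← Subgroup.normal_mul, hC2]; trivial
      obtain ⟨v, hv, c, hc, rfl⟩ := hxVC
      have hcP : c ∈ (P : Subgroup G) := by
        have : v⁻¹ * (v * c) ∈ (P : Subgroup G) :=
          Subgroup.mul_mem _ (Subgroup.inv_mem _ (hVP hv)) hx
        simpa using this
      exact Subgroup.mul_mem _ (Subgroup.mem_sup_left hv)
        (Subgroup.mem_sup_right ⟨hcP, hc⟩)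
  · rintro ⟨C, _, h1, h2⟩
    exact gaschuetz_aux hV hVab P C h1 h2
end
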